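/- Let V be a real inner product space, A : V → V a symmetric linear map with ⟪A v, v⟫ ≥ λ₁‖v‖² for all v ∈ V for some λ₁ > 0, f : [0,∞) → V continuously differentiable, and let u : [0,∞) → V be twice continuously differentiable with u'(t) + (1 + ⟪A u(t), u(t)⟫) · A u(t) = f(t) for all t ≥ 0. Then for every α with 0 < α < λ₁/2, setting β = 1 − 2α/λ₁, for all t ≥ 0: ‖u'(t)‖² + e^{−2αt} ∫₀ᵗ e^{2αs} [ (β + 2⟪A u(s), u(s)⟫)⟪A u'(s), u'(s)⟫ + 4⟪A u'(s), u(s)⟫² ] ds ≤ e^{−2αt}‖u'(0)‖² + (1/λ₁) e^{−2αt} ∫₀ᵗ e^{2αs} ‖f'(s)‖² ds. -/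

import Mathlib

open Set Real

/-- Abstract form of the first estimate of Lemma 2.4: exponentially weighted bound on
`‖u'(t)‖` obtained by differentiating the Kirchhoff equation in time. -/
theorem semidiscrete_apriori_ut_H1
    {V : Type*} [NormedAddCommGroup V] [InnerProductSpace ℝ V]
    (A : V →ₗ[ℝ] V)
    (hsymm : ∀ v w : V, (inner ℝ (A v) w : ℝ) = inner ℝ v (A w))
    (lambda1 : ℝ) (hlambda1 : 0 < lambda1)
    (hcoercive : ∀ v : V, (inner ℝ (A v) v : ℝ) ≥ lambda1 * ‖v‖ ^ 2)
    (f f' : ℝ → V)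
    (hf'_cont : ContinuousOn f' (Ici 0))
    (hf_deriv : ∀ t ∈ Ici (0 : ℝ), HasDerivWithinAt f (f' t) (Ici 0) t)
    (u u' u'' : ℝ → V)
    (hu''_cont : ContinuousOn u'' (Ici 0))
    (hu_deriv : ∀ t ∈ Ici (0 : ℝ), HasDerivWithinAt u (u' t) (Ici 0) t)
    (hu'_deriv : ∀ t ∈ Ici (0 : ℝ), HasDerivWithinAt u' (u'' t) (Ici 0) t)
    (heq : ∀ t ∈ Ici (0 : ℝ), u' t + (1 + (inner ℝ (A (u t)) (u t) : ℝ)) • A (u t) = f t)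
    (α : ℝ) (hα : 0 < α) (halam : α < lambda1 / 2) (β : ℝ) (hβ : β = 1 - 2 * α / lambda1) :
    ∀ t ∈ Ici (0 : ℝ),
      ‖u' t‖ ^ 2
          + exp (-2 * α * t) *
              (∫ s in (0 : ℝ)..t,
                exp (2 * α * s) *
                  ((β + 2 * (inner ℝ (A (u s)) (u s) : ℝ)) * (inner ℝ (A (u' s)) (u' s) : ℝ)
                    + 4 * (inner ℝ (A (u' s)) (u s) : ℝ) ^ 2))
        ≤ exp (-2 * α * t) * ‖u' 0‖ ^ 2
            + (1 / lambda1) * exp (-2 * α * t) *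
                (∫ s in (0 : ℝ)..t, exp (2 * α * s) * ‖f' s‖ ^ 2) := by
  have hIci : UniqueDiffOn ℝ (Ici (0:ℝ)) := uniqueDiffOn_Ici 0
  have hu_cont : ContinuousOn u (Ici 0) := fun t ht => (hu_deriv t ht).continuousWithinAt
  have hu'_cont : ContinuousOn u' (Ici 0) := fun t ht => (hu'_deriv t ht).continuousWithinAt
  have hf_cont : ContinuousOn f (Ici 0) := fun t ht => (hf_deriv t ht).continuousWithinAt
  set p : ℝ → ℝ := fun t => inner ℝ (f t - u' t) (u t) with hp_def
  set p' : ℝ → ℝ := fun t => inner ℝ (f t - u' t) (u' t) + inner ℝ (f' t - u'' t) (u t) with hp'_def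
  set c : ℝ → ℝ := fun t => (1 + Real.sqrt (1 + 4 * p t)) / 2 with hc_def
  set c' : ℝ → ℝ := fun t => p' t / Real.sqrt (1 + 4 * p t) with hc'_def
  set g : ℝ → V := fun t => (c t)⁻¹ • (f t - u' t) with hg_def
  set g' : ℝ → V := fun t => (-(c' t) / (c t)^2) • (f t - u' t) + (c t)⁻¹ • (f' t - u'' t)
    with hg'_def
  have ha_nonneg : ∀ t : ℝ, (0:ℝ) ≤ inner ℝ (A (u t)) (u t) := fun t =>
    le_trans (mul_nonneg hlambda1.le (sq_nonneg _)) (hcoercive (u t))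
  have hkey : ∀ t ∈ Ici (0:ℝ), (1 + (inner ℝ (A (u t)) (u t) : ℝ)) • A (u t) = f t - u' t := by
    intro t ht
    have h := heq t ht
    rw [← h]; abel
  have hpeq : ∀ t ∈ Ici (0:ℝ),
      p t = (1 + (inner ℝ (A (u t)) (u t) : ℝ)) * inner ℝ (A (u t)) (u t) := by
    intro t ht
    rw [hp_def]
    simp only
    rw [← hkey t ht, real_inner_smul_left]
  have hsq : ∀ t ∈ Ici (0:ℝ),
      Real.sqrt (1 + 4 * p t) = 2 * (1 + (inner ℝ (A (u t)) (u t) : ℝ)) - 1 := by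
    intro t ht
    have ha := ha_nonneg t
    have h1 : 1 + 4 * p t = (2 * (1 + (inner ℝ (A (u t)) (u t) : ℝ)) - 1)^2 := by
      rw [hpeq t ht]; ring
    rw [h1, Real.sqrt_sq (by linarith)]
  have hceq : ∀ t ∈ Ici (0:ℝ), c t = 1 + (inner ℝ (A (u t)) (u t) : ℝ) := by
    intro t ht
    rw [hc_def]
    simp only
    rw [hsq t ht]; ring
  have hc_ge : ∀ t ∈ Ici (0:ℝ), (1:ℝ) ≤ c t := by
    intro t ht
    rw [hceq t ht]
    linarith [ha_nonneg t]
  have hc_ne : ∀ t ∈ Ici (0:ℝ), c t ≠ 0 := fun t ht => by linarith [hc_ge t ht]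
  have hgAu : ∀ t ∈ Ici (0:ℝ), A (u t) = g t := by
    intro t ht
    rw [hg_def]
    simp only
    rw [← hkey t ht, ← hceq t ht, smul_smul, inv_mul_cancel₀ (hc_ne t ht), one_smul]
  have hsqrt_pos : ∀ t ∈ Ici (0:ℝ), (0:ℝ) < Real.sqrt (1 + 4 * p t) := by
    intro t ht
    rw [hsq t ht]
    linarith [ha_nonneg t]
  have hsqrt_ne : ∀ t ∈ Ici (0:ℝ), Real.sqrt (1 + 4 * p t) ≠ 0 :=
    fun t ht => (hsqrt_pos t ht).ne'
  -- derivatives of the scalar auxiliary functions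
  have hp_d : ∀ t ∈ Ici (0:ℝ), HasDerivWithinAt p (p' t) (Ici 0) t := by
    intro t ht
    exact ((hf_deriv t ht).sub (hu'_deriv t ht)).inner ℝ (hu_deriv t ht)
  have hc_d : ∀ t ∈ Ici (0:ℝ), HasDerivWithinAt c (c' t) (Ici 0) t := by
    intro t ht
    have hy : HasDerivWithinAt (fun s => 1 + 4 * p s) (4 * p' t) (Ici 0) t :=
      ((hp_d t ht).const_mul 4).const_add 1
    have hpnn : (0:ℝ) ≤ p t := by
      rw [hpeq t ht]; nlinarith [ha_nonneg t]
    have hne : (1 + 4 * p t) ≠ 0 := by positivity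
    have hs := (Real.hasDerivAt_sqrt hne).comp_hasDerivWithinAt t hy
    have h2 := ((hs.const_add 1).div_const 2)
    refine h2.congr_deriv ?_
    rw [hc'_def]
    simp only [Function.comp]
    field_simp
    ring
  have hg_d : ∀ t ∈ Ici (0:ℝ), HasDerivWithinAt g (g' t) (Ici 0) t := by
    intro t ht
    have hinv : HasDerivWithinAt (fun s => (c s)⁻¹) (-(c' t) / (c t)^2) (Ici 0) t := by
      have := (hc_d t ht).inv (hc_ne t ht)
      exact this
    have := hinv.smul ((hf_deriv t ht).sub (hu'_deriv t ht))
    refine this.congr_deriv ?_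
    rw [hg'_def]
    simp only [Pi.sub_apply]
    module
  -- A (u' t) = g' t
  have hAu' : ∀ t ∈ Ici (0:ℝ), A (u' t) = g' t := by
    intro t ht
    apply ext_inner_right ℝ
    intro w
    have h1 : HasDerivWithinAt (fun s => (inner ℝ (g s) w : ℝ)) (inner ℝ (g' t) w) (Ici 0) t := by
      simpa using (hg_d t ht).inner ℝ (hasDerivWithinAt_const t (Ici 0) w)
    have h3 : HasDerivWithinAt (fun s => (inner ℝ (u s) (A w) : ℝ)) (inner ℝ (u' t) (A w)) (Ici 0) t := by
      simpa using (hu_deriv t ht).inner ℝ (hasDerivWithinAt_const t (Ici 0) (A w))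
    have h2 : HasDerivWithinAt (fun s => (inner ℝ (g s) w : ℝ)) (inner ℝ (u' t) (A w)) (Ici 0) t := by
      refine h3.congr (fun s hs => ?_) ?_
      · rw [← hgAu s hs, hsymm]
      · rw [← hgAu t ht, hsymm]
    have huniq : (inner ℝ (g' t) w : ℝ) = inner ℝ (u' t) (A w) := by
      rw [← h1.derivWithin (hIci t ht), h2.derivWithin (hIci t ht)]
    rw [hsymm, ← huniq]
  -- c' t = 2 ⟪A u', u⟫
  have hc'_eq : ∀ t ∈ Ici (0:ℝ), c' t = 2 * (inner ℝ (A (u' t)) (u t) : ℝ) := by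
    intro t ht
    have hk : HasDerivWithinAt (fun s => 1 + (inner ℝ (g s) (u s) : ℝ))
        ((inner ℝ (g t) (u' t) : ℝ) + inner ℝ (g' t) (u t)) (Ici 0) t :=
      ((hg_d t ht).inner ℝ (hu_deriv t ht)).const_add 1
    have hck : HasDerivWithinAt c ((inner ℝ (g t) (u' t) : ℝ) + inner ℝ (g' t) (u t)) (Ici 0) t := by
      refine hk.congr (fun s hs => ?_) ?_
      · rw [hceq s hs, hgAu s hs]
      · rw [hceq t ht, hgAu t ht]
    have h4 : c' t = (inner ℝ (g t) (u' t) : ℝ) + inner ℝ (g' t) (u t) := by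
      rw [← (hc_d t ht).derivWithin (hIci t ht), hck.derivWithin (hIci t ht)]
    rw [h4, ← hgAu t ht, hsymm (u t) (u' t), ← hAu' t ht]
    linarith [real_inner_comm (u t) (A (u' t))]
  -- differentiated equation
  have hu''_eq : ∀ t ∈ Ici (0:ℝ), u'' t = f' t - (c t • g' t + c' t • g t) := by
    intro t ht
    have hcg : ∀ s ∈ Ici (0:ℝ), f s - c s • g s = u' s := by
      intro s hs
      rw [hg_def]
      simp only
      rw [smul_smul, mul_inv_cancel₀ (hc_ne s hs), one_smul]
      abel
    have hR : HasDerivWithinAt (fun s => f s - c s • g s)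
        (f' t - (c t • g' t + c' t • g t)) (Ici 0) t :=
      (hf_deriv t ht).sub ((hc_d t ht).smul (hg_d t ht))
    have hu'2 : HasDerivWithinAt u' (f' t - (c t • g' t + c' t • g t)) (Ici 0) t :=
      hR.congr (fun s hs => (hcg s hs).symm) (hcg t ht).symm
    rw [← (hu'_deriv t ht).derivWithin (hIci t ht), hu'2.derivWithin (hIci t ht)]
  have hu''_inner : ∀ t ∈ Ici (0:ℝ), (inner ℝ (u'' t) (u' t) : ℝ) =
      inner ℝ (f' t) (u' t) - c' t * inner ℝ (g t) (u' t) - c t * inner ℝ (g' t) (u' t) := by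
    intro t ht
    rw [hu''_eq t ht]
    simp only [inner_sub_left, inner_add_left, real_inner_smul_left]
    ring
  -- continuity of auxiliary functions
  have hp_cont : ContinuousOn p (Ici 0) := (hf_cont.sub hu'_cont).inner hu_cont
  have hp'_cont : ContinuousOn p' (Ici 0) :=
    ((hf_cont.sub hu'_cont).inner hu'_cont).add ((hf'_cont.sub hu''_cont).inner hu_cont)
  have hsqrtp_cont : ContinuousOn (fun t => Real.sqrt (1 + 4 * p t)) (Ici 0) :=
    Real.continuous_sqrt.comp_continuousOn
      (continuousOn_const.add (continuousOn_const.mul hp_cont))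
  have hc_cont : ContinuousOn c (Ici 0) :=
    (continuousOn_const.add hsqrtp_cont).div_const 2
  have hc'_cont : ContinuousOn c' (Ici 0) := hp'_cont.div hsqrtp_cont hsqrt_ne
  have hcinv_cont : ContinuousOn (fun t => (c t)⁻¹) (Ici 0) := hc_cont.inv₀ hc_ne
  have hg_cont : ContinuousOn g (Ici 0) := hcinv_cont.smul (hf_cont.sub hu'_cont)
  have hg'_cont : ContinuousOn g' (Ici 0) :=
    ((hc'_cont.neg.div (hc_cont.pow 2) (fun t ht => pow_ne_zero 2 (hc_ne t ht))).smul
      (hf_cont.sub hu'_cont)).add (hcinv_cont.smul (hf'_cont.sub hu''_cont))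
  -- the integrand and energy function
  set J : ℝ → ℝ := fun s => exp (2*α*s) *
      ((β + 2 * (inner ℝ (g s) (u s) : ℝ)) * (inner ℝ (g' s) (u' s) : ℝ)
        + 4 * (inner ℝ (g' s) (u s) : ℝ)^2 - 1/lambda1 * ‖f' s‖^2) with hJ_def
  have hJ_cont : ContinuousOn J (Ici 0) := by
    apply ContinuousOn.mul
    · exact ((continuous_const.mul continuous_id).rexp).continuousOn
    · exact (((continuousOn_const.add (continuousOn_const.mul (hg_cont.inner hu_cont))).mul
        (hg'_cont.inner hu'_cont)).add
          (continuousOn_const.mul ((hg'_cont.inner hu_cont).pow 2))).sub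
            (continuousOn_const.mul (hf'_cont.norm.pow 2))
  have hJ_int : ∀ t ∈ Ici (0:ℝ), IntervalIntegrable J MeasureTheory.volume 0 t := by
    intro t ht
    apply ContinuousOn.intervalIntegrable
    exact hJ_cont.mono (by rw [uIcc_of_le (mem_Ici.mp ht)]; exact Icc_subset_Ici_self)
  set E : ℝ → ℝ := fun t => exp (2*α*t) * (inner ℝ (u' t) (u' t) : ℝ) + ∫ s in (0:ℝ)..t, J s
    with hE_def
  have hInt_cont : ContinuousOn (fun t => ∫ s in (0:ℝ)..t, J s) (Ici 0) := by
    intro t ht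
    have ht0 : (0:ℝ) ≤ t := ht
    have hC : ContinuousOn (fun b => ∫ s in (0:ℝ)..b, J s) (uIcc 0 (t+1)) :=
      intervalIntegral.continuousOn_primitive_interval'
        (hJ_int (t+1) (by simp; linarith)) left_mem_uIcc
    have hCt := hC t (by rw [uIcc_of_le (by linarith)]; exact ⟨ht0, by linarith⟩)
    have hmem : uIcc (0:ℝ) (t+1) ∈ nhdsWithin t (Ici 0) := by
      rw [uIcc_of_le (by linarith : (0:ℝ) ≤ t+1), ← Ici_inter_Iic]
      exact Filter.inter_mem self_mem_nhdsWithin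
        (mem_nhdsWithin_of_mem_nhds (Iic_mem_nhds (by linarith)))
    exact ContinuousWithinAt.mono_of_mem_nhdsWithin hCt hmem
  have hE_cont : ContinuousOn E (Ici 0) :=
    ((((continuous_const.mul continuous_id).rexp).continuousOn).mul
      (hu'_cont.inner hu'_cont)).add hInt_cont
  have hE_deriv : ∀ x ∈ Ioi (0:ℝ), HasDerivAt E
      (exp (2*α*x) * (2*α) * (inner ℝ (u' x) (u' x) : ℝ)
        + exp (2*α*x) * ((inner ℝ (u' x) (u'' x) : ℝ) + inner ℝ (u'' x) (u' x)) + J x) x := by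
    intro x hx
    have hxI : x ∈ Ici (0:ℝ) := le_of_lt (mem_Ioi.mp hx)
    have hnhds : Ici (0:ℝ) ∈ nhds x := Ici_mem_nhds hx
    have hu'x : HasDerivAt u' (u'' x) x := (hu'_deriv x hxI).hasDerivAt hnhds
    have hq : HasDerivAt (fun t => (inner ℝ (u' t) (u' t) : ℝ))
        ((inner ℝ (u' x) (u'' x) : ℝ) + inner ℝ (u'' x) (u' x)) x := hu'x.inner ℝ hu'x
    have hlin : HasDerivAt (fun t : ℝ => 2*α*t) (2*α) x := by
      simpa using (hasDerivAt_id x).const_mul (2*α)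
    have hexp : HasDerivAt (fun t => exp (2*α*t)) (exp (2*α*x) * (2*α)) x := hlin.exp
    have hIpart : HasDerivAt (fun t => ∫ s in (0:ℝ)..t, J s) (J x) x := by
      refine intervalIntegral.integral_hasDerivAt_right (hJ_int x hxI) ?_ ?_
      · exact ContinuousOn.stronglyMeasurableAtFilter isOpen_Ioi
          (hJ_cont.mono Ioi_subset_Ici_self) x hx
      · exact (hJ_cont x hxI).continuousAt hnhds
    exact (hexp.mul hq).add hIpart
  have hE'_nonpos : ∀ x ∈ Ioi (0:ℝ),
      exp (2*α*x) * (2*α) * (inner ℝ (u' x) (u' x) : ℝ)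
        + exp (2*α*x) * ((inner ℝ (u' x) (u'' x) : ℝ) + inner ℝ (u'' x) (u' x)) + J x ≤ 0 := by
    intro x hx
    have hxI : x ∈ Ici (0:ℝ) := le_of_lt (mem_Ioi.mp hx)
    have hQ : (2*α) * (inner ℝ (u' x) (u' x) : ℝ)
        + ((inner ℝ (u' x) (u'' x) : ℝ) + inner ℝ (u'' x) (u' x))
        + ((β + 2 * (inner ℝ (g x) (u x) : ℝ)) * (inner ℝ (g' x) (u' x) : ℝ)
            + 4 * (inner ℝ (g' x) (u x) : ℝ)^2 - 1/lambda1 * ‖f' x‖^2) ≤ 0 := by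
      have h1 := hu''_inner x hxI
      have h1' : (inner ℝ (u' x) (u'' x) : ℝ) = inner ℝ (u'' x) (u' x) := real_inner_comm _ _
      have h2 : c' x = 2 * (inner ℝ (g' x) (u x) : ℝ) := by
        rw [hc'_eq x hxI, hAu' x hxI]
      have h3 : c x = 1 + (inner ℝ (g x) (u x) : ℝ) := by rw [hceq x hxI, hgAu x hxI]
      have h4 : (inner ℝ (g x) (u' x) : ℝ) = inner ℝ (g' x) (u x) := by
        rw [← hgAu x hxI, hsymm (u x) (u' x), hAu' x hxI, real_inner_comm]
      have h5 : (inner ℝ (u' x) (u' x) : ℝ) = ‖u' x‖^2 := real_inner_self_eq_norm_sq _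
      have hPco : lambda1 * ‖u' x‖^2 ≤ (inner ℝ (g' x) (u' x) : ℝ) := by
        rw [← hAu' x hxI]; exact hcoercive (u' x)
      have hfu : (inner ℝ (f' x) (u' x) : ℝ) ≤ ‖f' x‖ * ‖u' x‖ := real_inner_le_norm _ _
      have key : 2*α*‖u' x‖^2 + 2*(inner ℝ (f' x) (u' x) : ℝ)
          - (1 + 2*α/lambda1) * (inner ℝ (g' x) (u' x) : ℝ) - ‖f' x‖^2/lambda1 ≤ 0 := by
        have hA1 : (1 + 2*α/lambda1) * (lambda1 * ‖u' x‖^2)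
            ≤ (1 + 2*α/lambda1) * (inner ℝ (g' x) (u' x) : ℝ) :=
          mul_le_mul_of_nonneg_left hPco (by positivity)
        have hA2 : (1 + 2*α/lambda1) * (lambda1 * ‖u' x‖^2)
            = lambda1*‖u' x‖^2 + 2*α*‖u' x‖^2 := by field_simp
        have hA3 : 2*(‖f' x‖*‖u' x‖) ≤ ‖f' x‖^2/lambda1 + lambda1*‖u' x‖^2 := by
          rw [← sub_nonneg]
          have hA4 : ‖f' x‖^2/lambda1 + lambda1*‖u' x‖^2 - 2*(‖f' x‖*‖u' x‖)
              = (‖f' x‖ - lambda1*‖u' x‖)^2/lambda1 := by field_simp; ring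
          rw [hA4]; positivity
        linarith
      rw [h1', h1, h4, h2, h3, h5, hβ]
      exact le_of_eq_of_le (by ring) key
    have h0 : (0:ℝ) ≤ exp (2*α*x) := (Real.exp_pos _).le
    simp only [hJ_def]
    nlinarith [mul_nonneg h0 (neg_nonneg.mpr hQ)]
  have hanti : AntitoneOn E (Ici 0) := by
    apply antitoneOn_of_deriv_nonpos (convex_Ici 0) hE_cont
    · intro x hx
      rw [interior_Ici] at hx
      exact ((hE_deriv x hx).differentiableAt).differentiableWithinAt
    · intro x hx
      rw [interior_Ici] at hx
      rw [(hE_deriv x hx).deriv]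
      exact hE'_nonpos x hx
  -- conclusion
  intro t ht
  have ht0 : (0:ℝ) ≤ t := ht
  have hEt : E t ≤ E 0 := hanti self_mem_Ici ht ht0
  simp only [hE_def, intervalIntegral.integral_same, mul_zero, Real.exp_zero, one_mul,
    add_zero] at hEt
  have hKg_int : IntervalIntegrable (fun s => exp (2*α*s) *
      ((β + 2 * (inner ℝ (g s) (u s):ℝ)) * (inner ℝ (g' s) (u' s):ℝ)
        + 4 * (inner ℝ (g' s) (u s):ℝ)^2)) MeasureTheory.volume 0 t := by
    apply ContinuousOn.intervalIntegrable
    have hcc : ContinuousOn (fun s => exp (2*α*s) *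
        ((β + 2 * (inner ℝ (g s) (u s):ℝ)) * (inner ℝ (g' s) (u' s):ℝ)
          + 4 * (inner ℝ (g' s) (u s):ℝ)^2)) (Ici 0) :=
      (((continuous_const.mul continuous_id).rexp).continuousOn).mul
        (((continuousOn_const.add (continuousOn_const.mul (hg_cont.inner hu_cont))).mul
          (hg'_cont.inner hu'_cont)).add (continuousOn_const.mul ((hg'_cont.inner hu_cont).pow 2)))
    exact hcc.mono (by rw [uIcc_of_le ht0]; exact Icc_subset_Ici_self)
  have hL_int : IntervalIntegrable (fun s => exp (2*α*s) * ‖f' s‖^2)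
      MeasureTheory.volume 0 t := by
    apply ContinuousOn.intervalIntegrable
    have hcc : ContinuousOn (fun s => exp (2*α*s) * ‖f' s‖^2) (Ici 0) :=
      (((continuous_const.mul continuous_id).rexp).continuousOn).mul (hf'_cont.norm.pow 2)
    exact hcc.mono (by rw [uIcc_of_le ht0]; exact Icc_subset_Ici_self)
  have hsplit : (∫ s in (0:ℝ)..t, J s)
      = (∫ s in (0:ℝ)..t, exp (2*α*s) *
          ((β + 2 * (inner ℝ (g s) (u s):ℝ)) * (inner ℝ (g' s) (u' s):ℝ)
            + 4 * (inner ℝ (g' s) (u s):ℝ)^2))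
        - 1/lambda1 * ∫ s in (0:ℝ)..t, exp (2*α*s) * ‖f' s‖^2 := by
    rw [← intervalIntegral.integral_const_mul,
      ← intervalIntegral.integral_sub hKg_int (hL_int.const_mul _)]
    apply intervalIntegral.integral_congr
    intro s hs
    simp only [hJ_def]
    ring
  have hKg_eq : (∫ s in (0:ℝ)..t, exp (2*α*s) *
        ((β + 2*(inner ℝ (A (u s)) (u s):ℝ)) * (inner ℝ (A (u' s)) (u' s):ℝ)
          + 4*(inner ℝ (A (u' s)) (u s):ℝ)^2))
      = ∫ s in (0:ℝ)..t, exp (2*α*s) *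
          ((β + 2*(inner ℝ (g s) (u s):ℝ)) * (inner ℝ (g' s) (u' s):ℝ)
            + 4*(inner ℝ (g' s) (u s):ℝ)^2) := by
    apply intervalIntegral.integral_congr
    intro s hs
    have hsI : s ∈ Ici (0:ℝ) := by
      rw [uIcc_of_le ht0] at hs
      exact hs.1
    simp only [hgAu s hsI, hAu' s hsI]
  rw [hsplit] at hEt
  have hu'0 : (inner ℝ (u' 0) (u' 0):ℝ) = ‖u' 0‖^2 := real_inner_self_eq_norm_sq _
  have hu't : (inner ℝ (u' t) (u' t):ℝ) = ‖u' t‖^2 := real_inner_self_eq_norm_sq _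
  rw [hu'0, hu't] at hEt
  have hexppos : (0:ℝ) < exp (-2*α*t) := Real.exp_pos _
  have hexp1 : exp (-2*α*t) * exp (2*α*t) = 1 := by
    rw [← Real.exp_add]; norm_num
  have h9 := mul_le_mul_of_nonneg_left hEt hexppos.le
  rw [hKg_eq]
  nlinarith [h9, hexp1, sq_nonneg ‖u' t‖]
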